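/- arXiv:0710.5310 — 2 statements merged into one kernel-verified Lean document; each statement's English description precedes it below -/
import Mathlib

section
/- The integral curves of the vector field k = ∂_r are geodesics (up to reparametrization) of the metric g = (1/(s²y²cos²(r/2)))·( (3/2)(dx²+dy²) + (dx + y³du)(y dr + (1/3)y³cos r du + (2 + (7/3)cos r)dx + 2 sin r dy) ); i.e. ∇_k k is proportional to k at every point. -/
noncomputable section

/-- Components of the 1-form α = dx + y³ du in coordinates (x,y,u,r). -/
def alphaForm (y : ℝ) : Fin 4 → ℝ := ![1, 0, y ^ 3, 0]

/-- Components of the 1-form β = (2 + (7/3)cos r) dx + 2 sin r dy + (1/3) y³ cos r du + y dr. -/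
def betaForm (y r : ℝ) : Fin 4 → ℝ :=
  ![2 + (7 / 3) * Real.cos r, 2 * Real.sin r, (1 / 3) * y ^ 3 * Real.cos r, y]

/-- The metric g of Nurowski's formula (1), as a matrix-valued function of the point
v = (x,y,u,r) ∈ ℝ⁴. -/
def gF (s : ℝ) (v : Fin 4 → ℝ) : Matrix (Fin 4) (Fin 4) ℝ := fun i j =>
  (1 / (s ^ 2 * (v 1) ^ 2 * (Real.cos (v 3 / 2)) ^ 2)) *
    ((3 / 2) * ((if i = 0 then (1 : ℝ) else 0) * (if j = 0 then (1 : ℝ) else 0)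
              + (if i = 1 then (1 : ℝ) else 0) * (if j = 1 then (1 : ℝ) else 0))
      + (alphaForm (v 1) i * betaForm (v 1) (v 3) j
          + alphaForm (v 1) j * betaForm (v 1) (v 3) i) / 2)

/-- Partial derivative of a real function on ℝ⁴ in the k-th coordinate direction. -/
def pd (F : (Fin 4 → ℝ) → ℝ) (v : Fin 4 → ℝ) (k : Fin 4) : ℝ :=
  fderiv ℝ F v (Pi.single k 1)

/-- The inverse metric. -/
def gInv (s : ℝ) (v : Fin 4 → ℝ) : Matrix (Fin 4) (Fin 4) ℝ := (gF s v)⁻¹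

/-- Christoffel symbols Γ^l_{ij} of the Levi-Civita connection of g. -/
def Gamma (s : ℝ) (v : Fin 4 → ℝ) (l i j : Fin 4) : ℝ :=
  (1 / 2) * ∑ m, gInv s v l m *
    (pd (fun w => gF s w m j) v i + pd (fun w => gF s w m i) v j
      - pd (fun w => gF s w i j) v m)

/-- Ricci tensor R_{ij} = ∂_k Γ^k_{ij} − ∂_j Γ^k_{ik} + Γ^k_{kl}Γ^l_{ij} − Γ^k_{jl}Γ^l_{ik}. -/
def RicciT (s : ℝ) (v : Fin 4 → ℝ) (i j : Fin 4) : ℝ :=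
  (∑ k, pd (fun w => Gamma s w k i j) v k) - (∑ k, pd (fun w => Gamma s w k i k) v j)
    + (∑ k, ∑ l, Gamma s v k k l * Gamma s v l i j)
    - (∑ k, ∑ l, Gamma s v k j l * Gamma s v l i k)


-- ===== auxiliary lemmas =====

lemma g03_eq (s : ℝ) (hs : s ≠ 0) :
    (fun w : Fin 4 → ℝ => gF s w 0 3)
      = fun w => (2 * s ^ 2 * w 1 * Real.cos (w 3 / 2) * Real.cos (w 3 / 2))⁻¹ := by
  funext w
  simp [gF, alphaForm, betaForm]
  by_cases h1 : w 1 = 0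
  · simp [h1]
  by_cases h2 : Real.cos (w 3 / 2) = 0
  · simp [h2]
  field_simp

lemma g23_eq (s : ℝ) (hs : s ≠ 0) :
    (fun w : Fin 4 → ℝ => gF s w 2 3)
      = fun w => w 1 * w 1 * (2 * s ^ 2 * Real.cos (w 3 / 2) * Real.cos (w 3 / 2))⁻¹ := by
  funext w
  simp [gF, alphaForm, betaForm]
  by_cases h1 : w 1 = 0
  · simp [h1]
  by_cases h2 : Real.cos (w 3 / 2) = 0
  · simp [h2]
  field_simp

lemma g13_eq (s : ℝ) : (fun w : Fin 4 → ℝ => gF s w 1 3) = fun _ => (0 : ℝ) := by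
  funext w; simp [gF, alphaForm, betaForm]

lemma g33_eq (s : ℝ) : (fun w : Fin 4 → ℝ => gF s w 3 3) = fun _ => (0 : ℝ) := by
  funext w; simp [gF, alphaForm, betaForm]

lemma pd_g33 (s : ℝ) (v : Fin 4 → ℝ) (m : Fin 4) :
    pd (fun w => gF s w 3 3) v m = 0 := by
  rw [g33_eq, pd, fderiv_fun_const]
  simp

lemma hasF_cos (v : Fin 4 → ℝ) :
    HasFDerivAt (fun w : Fin 4 → ℝ => Real.cos (w 3 / 2))
      ((-Real.sin (v 3 / 2) * (1 / 2)) • (ContinuousLinearMap.proj 3 : (Fin 4 → ℝ) →L[ℝ] ℝ)) v := by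
  have hd : HasDerivAt (fun b : ℝ => Real.cos (b / 2)) (-Real.sin (v 3 / 2) * (1 / 2)) (v 3) :=
    by simpa [Function.comp_def] using (Real.hasDerivAt_cos (v 3 / 2)).comp (v 3) ((hasDerivAt_id (v 3)).div_const 2)
  exact hd.comp_hasFDerivAt v (ContinuousLinearMap.proj 3 : (Fin 4 → ℝ) →L[ℝ] ℝ).hasFDerivAt

lemma pd_g03 (s : ℝ) (hs : s ≠ 0) (v : Fin 4 → ℝ) (hy : v 1 ≠ 0)
    (hc : Real.cos (v 3 / 2) ≠ 0) :
    pd (fun w => gF s w 0 3) v 3 = Real.tan (v 3 / 2) * gF s v 0 3 := by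
  rw [show gF s v 0 3 = (2 * s ^ 2 * v 1 * Real.cos (v 3 / 2) * Real.cos (v 3 / 2))⁻¹ from
    congrFun (g03_eq s hs) v, g03_eq s hs, pd]
  have h1 : HasFDerivAt (fun w : Fin 4 → ℝ => w 1)
      (ContinuousLinearMap.proj 1 : (Fin 4 → ℝ) →L[ℝ] ℝ) v :=
    (ContinuousLinearMap.proj 1 : (Fin 4 → ℝ) →L[ℝ] ℝ).hasFDerivAt
  have hG := ((h1.const_mul (2 * s ^ 2)).mul (hasF_cos v)).mul (hasF_cos v)
  have hGne : 2 * s ^ 2 * v 1 * Real.cos (v 3 / 2) * Real.cos (v 3 / 2) ≠ 0 :=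
    mul_ne_zero (mul_ne_zero (mul_ne_zero (by positivity) hy) hc) hc
  have hF : HasFDerivAt
      (fun w : Fin 4 → ℝ => (2 * s ^ 2 * w 1 * Real.cos (w 3 / 2) * Real.cos (w 3 / 2))⁻¹) _ v :=
    (hasDerivAt_inv hGne).comp_hasFDerivAt v hG
  rw [hF.fderiv]
  simp [ContinuousLinearMap.add_apply, ContinuousLinearMap.smul_apply,
    ContinuousLinearMap.proj_apply, Pi.single_apply, smul_eq_mul]
  rw [Real.tan_eq_sin_div_cos]
  field_simp
  ring

lemma pd_g23 (s : ℝ) (hs : s ≠ 0) (v : Fin 4 → ℝ) (hy : v 1 ≠ 0)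
    (hc : Real.cos (v 3 / 2) ≠ 0) :
    pd (fun w => gF s w 2 3) v 3 = Real.tan (v 3 / 2) * gF s v 2 3 := by
  rw [show gF s v 2 3 = v 1 * v 1 * (2 * s ^ 2 * Real.cos (v 3 / 2) * Real.cos (v 3 / 2))⁻¹ from
    congrFun (g23_eq s hs) v, g23_eq s hs, pd]
  have h1 : HasFDerivAt (fun w : Fin 4 → ℝ => w 1)
      (ContinuousLinearMap.proj 1 : (Fin 4 → ℝ) →L[ℝ] ℝ) v :=
    (ContinuousLinearMap.proj 1 : (Fin 4 → ℝ) →L[ℝ] ℝ).hasFDerivAt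
  have hG := ((hasF_cos v).const_mul (2 * s ^ 2)).mul (hasF_cos v)
  have hGne : 2 * s ^ 2 * Real.cos (v 3 / 2) * Real.cos (v 3 / 2) ≠ 0 :=
    mul_ne_zero (mul_ne_zero (by positivity) hc) hc
  have hInv : HasFDerivAt
      (fun w : Fin 4 → ℝ => (2 * s ^ 2 * Real.cos (w 3 / 2) * Real.cos (w 3 / 2))⁻¹) _ v :=
    (hasDerivAt_inv hGne).comp_hasFDerivAt v hG
  have hF : HasFDerivAt
      (fun w : Fin 4 → ℝ => w 1 * w 1 * (2 * s ^ 2 * Real.cos (w 3 / 2) * Real.cos (w 3 / 2))⁻¹) _ v :=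
    (h1.mul h1).mul hInv
  rw [hF.fderiv]
  simp [ContinuousLinearMap.add_apply, ContinuousLinearMap.smul_apply,
    ContinuousLinearMap.proj_apply, Pi.single_apply, smul_eq_mul]
  rw [Real.tan_eq_sin_div_cos]
  field_simp
  ring

lemma pd_gm3 (s : ℝ) (hs : s ≠ 0) (v : Fin 4 → ℝ) (hy : v 1 ≠ 0)
    (hc : Real.cos (v 3 / 2) ≠ 0) (m : Fin 4) :
    pd (fun w => gF s w m 3) v 3 = Real.tan (v 3 / 2) * gF s v m 3 := by
  fin_cases m
  · exact pd_g03 s hs v hy hc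
  · show pd (fun w => gF s w 1 3) v 3 = Real.tan (v 3 / 2) * gF s v 1 3
    rw [show gF s v 1 3 = 0 from congrFun (g13_eq s) v, g13_eq s, pd, fderiv_fun_const]
    simp
  · exact pd_g23 s hs v hy hc
  · show pd (fun w => gF s w 3 3) v 3 = Real.tan (v 3 / 2) * gF s v 3 3
    rw [show gF s v 3 3 = 0 from congrFun (g33_eq s) v, g33_eq s, pd, fderiv_fun_const]
    simp

lemma gF_explicit (s : ℝ) (v : Fin 4 → ℝ) :
    gF s v = (1 / (s ^ 2 * (v 1) ^ 2 * (Real.cos (v 3 / 2)) ^ 2)) •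
      !![7/2 + 7/3 * Real.cos (v 3), Real.sin (v 3), (v 1)^3 * (1 + 4/3 * Real.cos (v 3)), v 1/2;
         Real.sin (v 3), 3/2, (v 1)^3 * Real.sin (v 3), 0;
         (v 1)^3 * (1 + 4/3 * Real.cos (v 3)), (v 1)^3 * Real.sin (v 3), (v 1)^6 * Real.cos (v 3)/3, (v 1)^4/2;
         v 1/2, 0, (v 1)^4/2, 0] := by
  funext i j
  fin_cases i <;> fin_cases j <;>
      simp [gF, alphaForm, betaForm, -mul_eq_mul_left_iff] <;>
    ring

lemma det_gF (s : ℝ) (hs : s ≠ 0) (v : Fin 4 → ℝ) (hy : v 1 ≠ 0)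
    (hc : Real.cos (v 3 / 2) ≠ 0) :
    (gF s v).det = -(9 / (16 * s ^ 8 * (Real.cos (v 3 / 2)) ^ 8)) := by
  rw [gF_explicit, Matrix.det_smul]
  have : (!![7/2 + 7/3 * Real.cos (v 3), Real.sin (v 3), (v 1)^3 * (1 + 4/3 * Real.cos (v 3)), v 1/2;
         Real.sin (v 3), 3/2, (v 1)^3 * Real.sin (v 3), 0;
         (v 1)^3 * (1 + 4/3 * Real.cos (v 3)), (v 1)^3 * Real.sin (v 3), (v 1)^6 * Real.cos (v 3)/3, (v 1)^4/2;
         v 1/2, 0, (v 1)^4/2, 0] : Matrix (Fin 4) (Fin 4) ℝ).det = -(9/16) * (v 1)^8 := by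
    rw [Matrix.det_succ_row_zero]
    simp [Fin.sum_univ_succ, Matrix.det_fin_three, Fin.succAbove]
    ring
  rw [this]
  simp only [Fintype.card_fin]
  field_simp

/-- The integral curves of k = ∂_r are (unparametrized) geodesics of the metric g:
(∇_k k)^l = Γ^l_{33} is proportional to k^l = δ^l_3 at every point of the domain. -/
theorem k_geodesic_up_to_reparametrization (s : ℝ) (hs : s ≠ 0) (v : Fin 4 → ℝ)
    (hy : v 1 ≠ 0) (hr : |v 3| < Real.pi) :
    ∃ c : ℝ, ∀ l : Fin 4, Gamma s v l 3 3 = c * (if l = 3 then 1 else 0) := by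
  have hc : Real.cos (v 3 / 2) ≠ 0 := by
    have h2 : |v 3 / 2| < Real.pi / 2 := by
      rw [abs_div]
      simp only [abs_two]
      linarith
    obtain ⟨hl, hu⟩ := abs_lt.mp h2
    exact ne_of_gt (Real.cos_pos_of_mem_Ioo ⟨hl, hu⟩)
  have hdet : (gF s v).det ≠ 0 := by
    rw [det_gF s hs v hy hc]
    exact neg_ne_zero.mpr (div_ne_zero (by norm_num)
      (mul_ne_zero (mul_ne_zero (by norm_num) (pow_ne_zero 8 hs)) (pow_ne_zero 8 hc)))
  have hinv : (gF s v)⁻¹ * gF s v = 1 := Matrix.nonsing_inv_mul _ (Ne.isUnit hdet)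
  refine ⟨Real.tan (v 3 / 2), fun l => ?_⟩
  have hentry : ∑ m, gInv s v l m * gF s v m 3 = if l = 3 then 1 else 0 := by
    have h := congrFun (congrFun hinv l) 3
    rw [Matrix.mul_apply, Matrix.one_apply] at h
    simpa [gInv] using h
  calc Gamma s v l 3 3
      = (1/2) * ∑ m, gInv s v l m *
          (Real.tan (v 3 / 2) * gF s v m 3 + Real.tan (v 3 / 2) * gF s v m 3 - 0) := by
        rw [Gamma]
        refine congrArg _ (Finset.sum_congr rfl fun m _ => ?_)
        rw [pd_gm3 s hs v hy hc m, pd_g33 s v m]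
    _ = Real.tan (v 3 / 2) * ∑ m, gInv s v l m * gF s v m 3 := by
        rw [Finset.mul_sum, Finset.mul_sum]
        exact Finset.sum_congr rfl fun m _ => by ring
    _ = Real.tan (v 3 / 2) * (if l = 3 then 1 else 0) := by rw [hentry]
end
end

section
/- The twist of the congruence tangent to k = ∂_r is nonzero: for the metric g of formula (1), the 1-form κ = g(k, ·) satisfies κ ∧ dκ ≠ 0 everywhere on {y ≠ 0, |r| < π}; equivalently the null congruence generated by k is twisting. -/
noncomputable section

/-- The metric-dual 1-form of k = ∂_r:  κ_j = g(∂_r, e_j) = g_{3j}. -/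
def kappa (s : ℝ) (v : Fin 4 → ℝ) (j : Fin 4) : ℝ := gF s v 3 j

/-- Exterior derivative of κ: (dκ)_{ij} = ∂_i κ_j − ∂_j κ_i. -/
def dKappa (s : ℝ) (v : Fin 4 → ℝ) (i j : Fin 4) : ℝ :=
  pd (fun w => kappa s w j) v i - pd (fun w => kappa s w i) v j

lemma kappa1_eq (s : ℝ) : (fun w : Fin 4 → ℝ => kappa s w 1) = fun _ => (0:ℝ) := by
  funext w; simp [kappa, gF, alphaForm, betaForm]

lemma kappa0_eq (s : ℝ) : (fun w : Fin 4 → ℝ => kappa s w 0)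
    = fun w => (2 * s ^ 2 * (w 1 * (Real.cos (w 3 / 2) * Real.cos (w 3 / 2))))⁻¹ := by
  funext w
  have h : kappa s w 0 = (1 / (s ^ 2 * (w 1) ^ 2 * (Real.cos (w 3 / 2)) ^ 2)) * (w 1 / 2) := by
    simp [kappa, gF, alphaForm, betaForm]
  rw [h]
  rcases eq_or_ne s 0 with hs | hs
  · simp [hs]
  rcases eq_or_ne (w 1) 0 with h1 | h1
  · simp [h1]
  rcases eq_or_ne (Real.cos (w 3 / 2)) 0 with h2 | h2
  · simp [h2]
  field_simp

lemma kappa2_eq (s : ℝ) : (fun w : Fin 4 → ℝ => kappa s w 2)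
    = fun w => (w 1 * w 1) * (2 * s ^ 2 * (Real.cos (w 3 / 2) * Real.cos (w 3 / 2)))⁻¹ := by
  funext w
  have h : kappa s w 2
      = (1 / (s ^ 2 * (w 1) ^ 2 * (Real.cos (w 3 / 2)) ^ 2)) * ((w 1) ^ 3 * w 1 / 2) := by
    simp [kappa, gF, alphaForm, betaForm]
  rw [h]
  rcases eq_or_ne s 0 with hs | hs
  · simp [hs]
  rcases eq_or_ne (w 1) 0 with h1 | h1
  · simp [h1]
  rcases eq_or_ne (Real.cos (w 3 / 2)) 0 with h2 | h2
  · simp [h2]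
  field_simp

/-- The congruence tangent to k = ∂_r is twisting: the 3-form κ∧dκ is nonzero at
every point of the domain {y ≠ 0, |r| < π}; i.e. some component
(κ∧dκ)(e_i,e_j,e_l) = κ_i (dκ)_{jl} − κ_j (dκ)_{il} + κ_l (dκ)_{ij} is nonzero. -/
theorem congruence_is_twisting (s : ℝ) (hs : s ≠ 0) (v : Fin 4 → ℝ)
    (hy : v 1 ≠ 0) (hr : |v 3| < Real.pi) :
    ∃ i j l : Fin 4,
      kappa s v i * dKappa s v j l - kappa s v j * dKappa s v i l
        + kappa s v l * dKappa s v i j ≠ 0 := by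
  have hc : Real.cos (v 3 / 2) ≠ 0 := by
    have h1 : -(Real.pi / 2) < v 3 / 2 := by
      have := neg_lt_of_abs_lt hr; linarith
    have h2 : v 3 / 2 < Real.pi / 2 := by
      have := lt_of_abs_lt hr; linarith
    exact ne_of_gt (Real.cos_pos_of_mem_Ioo ⟨h1, h2⟩)
  have hcc : Real.cos (v 3 / 2) * Real.cos (v 3 / 2) ≠ 0 := mul_ne_zero hc hc
  -- building blocks for derivatives
  have hp1 : HasFDerivAt (fun w : Fin 4 → ℝ => w 1)
      (ContinuousLinearMap.proj 1 : (Fin 4 → ℝ) →L[ℝ] ℝ) v :=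
    (ContinuousLinearMap.proj 1 : (Fin 4 → ℝ) →L[ℝ] ℝ).hasFDerivAt
  have hp3 : HasFDerivAt (fun w : Fin 4 → ℝ => w 3)
      (ContinuousLinearMap.proj 3 : (Fin 4 → ℝ) →L[ℝ] ℝ) v :=
    (ContinuousLinearMap.proj 3 : (Fin 4 → ℝ) →L[ℝ] ℝ).hasFDerivAt
  have hhalf : HasFDerivAt (fun w : Fin 4 → ℝ => w 3 / 2)
      ((2⁻¹ : ℝ) • (ContinuousLinearMap.proj 3 : (Fin 4 → ℝ) →L[ℝ] ℝ)) v := by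
    simpa [div_eq_inv_mul] using hp3.const_mul (2⁻¹ : ℝ)
  have hcos : HasFDerivAt (fun w : Fin 4 → ℝ => Real.cos (w 3 / 2))
      ((-Real.sin (v 3 / 2)) • ((2⁻¹ : ℝ) •
        (ContinuousLinearMap.proj 3 : (Fin 4 → ℝ) →L[ℝ] ℝ))) v :=
    (Real.hasDerivAt_cos (v 3 / 2)).comp_hasFDerivAt (f := fun w : Fin 4 → ℝ => w 3 / 2) v hhalf
  -- derivative of κ₀ in direction 1
  have hG0 := (hp1.mul (hcos.mul hcos)).const_mul (2 * s ^ 2)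
  have hG0ne : 2 * s ^ 2 * (v 1 * (Real.cos (v 3 / 2) * Real.cos (v 3 / 2))) ≠ 0 := by
    positivity
  have hF0 := (hasDerivAt_inv hG0ne).comp_hasFDerivAt v hG0
  have hfd0 : fderiv ℝ (fun w : Fin 4 → ℝ =>
      (2 * s ^ 2 * (w 1 * (Real.cos (w 3 / 2) * Real.cos (w 3 / 2))))⁻¹) v = _ := hF0.fderiv
  have e0 : pd (fun w => kappa s w 0) v 1
      = -(2 * s ^ 2 * (v 1 * v 1) * (Real.cos (v 3 / 2) * Real.cos (v 3 / 2)))⁻¹ := by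
    rw [pd, kappa0_eq, hfd0]
    simp [Pi.single_apply]
    field_simp
  -- derivative of κ₂ in direction 1
  have hH := (hcos.mul hcos).const_mul (2 * s ^ 2)
  have hHne : 2 * s ^ 2 * (Real.cos (v 3 / 2) * Real.cos (v 3 / 2)) ≠ 0 := by positivity
  have hF2 := (hp1.mul hp1).mul ((hasDerivAt_inv hHne).comp_hasFDerivAt v hH)
  have hfd2 : fderiv ℝ (fun w : Fin 4 → ℝ =>
      (w 1 * w 1) * (2 * s ^ 2 * (Real.cos (w 3 / 2) * Real.cos (w 3 / 2)))⁻¹) v = _ :=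
    hF2.fderiv
  have e2 : pd (fun w => kappa s w 2) v 1
      = v 1 * (s ^ 2 * (Real.cos (v 3 / 2) * Real.cos (v 3 / 2)))⁻¹ := by
    rw [pd, kappa2_eq, hfd2]
    simp [Pi.single_apply]
    field_simp
    ring
  -- κ₁ is identically zero
  have e1 : ∀ k : Fin 4, pd (fun w => kappa s w 1) v k = 0 := by
    intro k
    rw [kappa1_eq]
    simp [pd]
  -- values of κ at v
  have k0 : kappa s v 0 = (2 * s ^ 2 * (v 1 * (Real.cos (v 3 / 2) * Real.cos (v 3 / 2))))⁻¹ :=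
    congrFun (kappa0_eq s) v
  have k1 : kappa s v 1 = 0 := congrFun (kappa1_eq s) v
  have k2 : kappa s v 2
      = (v 1 * v 1) * (2 * s ^ 2 * (Real.cos (v 3 / 2) * Real.cos (v 3 / 2)))⁻¹ :=
    congrFun (kappa2_eq s) v
  refine ⟨0, 1, 2, ?_⟩
  simp only [dKappa]
  rw [e0, e1 2, e1 0, e2, k0, k1, k2]
  intro h
  field_simp at h
  have hne : (6:ℝ) * s ^ 4 * v 1 ^ 3 * Real.cos (v 3 / 2) ^ 4 ≠ 0 := by positivity
  exact hy (by linear_combination h / 3)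
end
end
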